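/- Γ₀ is a lattice in G: as a subset of ℝ⁵ it is discrete, and the quotient topological space G/Γ₀ (the space of left cosets with the quotient topology) is compact. -/

import Mathlib

/-- The simply connected nilpotent Lie group of type `(2,3,5)` in exponential
coordinates: the underlying set is `ℝ⁵`. -/
@[ext]
structure G235 where
  a : ℝ
  b : ℝ
  c : ℝ
  d : ℝ
  e : ℝ

namespace G235

/-- The Baker–Campbell–Hausdorff multiplication. -/
noncomputable instance : Mul G235 :=
  ⟨fun x y =>
    ⟨x.a + y.a, x.b + y.b,
      x.c + y.c + (x.a * y.b - x.b * y.a) / 2,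
      x.d + y.d + (x.a * y.c - x.c * y.a) / 2 + (x.a - y.a) * (x.a * y.b - x.b * y.a) / 12,
      x.e + y.e + (x.b * y.c - x.c * y.b) / 2 + (x.b - y.b) * (x.a * y.b - x.b * y.a) / 12⟩⟩

instance : One G235 := ⟨⟨0, 0, 0, 0, 0⟩⟩

noncomputable instance : Inv G235 := ⟨fun x => ⟨-x.a, -x.b, -x.c, -x.d, -x.e⟩⟩

@[simp] lemma mul_a (x y : G235) : (x * y).a = x.a + y.a := rfl
@[simp] lemma mul_b (x y : G235) : (x * y).b = x.b + y.b := rfl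
@[simp] lemma mul_c (x y : G235) :
    (x * y).c = x.c + y.c + (x.a * y.b - x.b * y.a) / 2 := rfl
@[simp] lemma mul_d (x y : G235) :
    (x * y).d = x.d + y.d + (x.a * y.c - x.c * y.a) / 2 +
      (x.a - y.a) * (x.a * y.b - x.b * y.a) / 12 := rfl
@[simp] lemma mul_e (x y : G235) :
    (x * y).e = x.e + y.e + (x.b * y.c - x.c * y.b) / 2 +
      (x.b - y.b) * (x.a * y.b - x.b * y.a) / 12 := rfl
@[simp] lemma one_a : (1 : G235).a = 0 := rfl
@[simp] lemma one_b : (1 : G235).b = 0 := rfl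
@[simp] lemma one_c : (1 : G235).c = 0 := rfl
@[simp] lemma one_d : (1 : G235).d = 0 := rfl
@[simp] lemma one_e : (1 : G235).e = 0 := rfl
@[simp] lemma inv_a (x : G235) : x⁻¹.a = -x.a := rfl
@[simp] lemma inv_b (x : G235) : x⁻¹.b = -x.b := rfl
@[simp] lemma inv_c (x : G235) : x⁻¹.c = -x.c := rfl
@[simp] lemma inv_d (x : G235) : x⁻¹.d = -x.d := rfl
@[simp] lemma inv_e (x : G235) : x⁻¹.e = -x.e := rfl

/-- The BCH multiplication makes `G235` a group with identity `0` and inverse `-x`. -/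
noncomputable instance : Group G235 where
  mul_assoc x y z := by ext <;> simp <;> ring
  one_mul x := by ext <;> simp
  mul_one x := by ext <;> simp
  inv_mul_cancel x := by ext <;> simp <;> ring

/-- `G235` carries the Euclidean topology of `ℝ⁵`. -/
instance : TopologicalSpace G235 :=
  TopologicalSpace.induced (fun x => (x.a, x.b, x.c, x.d, x.e)) inferInstance

/-- The generator `e₁ = (1,0,0,0,0)`. -/
noncomputable def e1 : G235 := ⟨1, 0, 0, 0, 0⟩

/-- The generator `e₂ = (0,1,0,0,0)`. -/
noncomputable def e2 : G235 := ⟨0, 1, 0, 0, 0⟩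

end G235

open G235

namespace G235Aux

open G235

/-- The discrete subgroup `Γ₀`. -/
noncomputable abbrev Γ : Subgroup G235 := Subgroup.closure ({e1, e2} : Set G235)

lemma he1 : e1 ∈ Γ := Subgroup.subset_closure (by simp)
lemma he2 : e2 ∈ Γ := Subgroup.subset_closure (by simp)

/-- The commutator `[e1, e2] = (0,0,1,1/2,1/2)`. -/
noncomputable def z3 : G235 := ⟨0, 0, 1, 1/2, 1/2⟩
/-- `[e1, z3] = (0,0,0,1,0)`. -/
noncomputable def z4 : G235 := ⟨0, 0, 0, 1, 0⟩
/-- `[e2, z3] = (0,0,0,0,1)`. -/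
noncomputable def z5 : G235 := ⟨0, 0, 0, 0, 1⟩

lemma hz3 : z3 ∈ Γ := by
  have h : z3 = e1 * e2 * (e1⁻¹ * e2⁻¹) := by
    ext <;> simp [e1, e2, z3] <;> norm_num
  rw [h]
  exact mul_mem (mul_mem he1 he2) (mul_mem (inv_mem he1) (inv_mem he2))

lemma hz4 : z4 ∈ Γ := by
  have h : z4 = e1 * z3 * (e1⁻¹ * z3⁻¹) := by
    ext <;> simp [e1, z3, z4] <;> norm_num
  rw [h]
  exact mul_mem (mul_mem he1 hz3) (mul_mem (inv_mem he1) (inv_mem hz3))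

lemma hz5 : z5 ∈ Γ := by
  have h : z5 = e2 * z3 * (e2⁻¹ * z3⁻¹) := by
    ext <;> simp [e2, z3, z5] <;> norm_num
  rw [h]
  exact mul_mem (mul_mem he2 hz3) (mul_mem (inv_mem he2) (inv_mem hz3))

lemma mem_e1pow (n : ℤ) : (⟨(n : ℝ), 0, 0, 0, 0⟩ : G235) ∈ Γ := by
  induction n using Int.induction_on with
  | zero => exact (by ext <;> simp : (⟨((0:ℤ):ℝ),0,0,0,0⟩ : G235) = 1) ▸ one_mem Γ
  | succ n ih =>
      have h : (⟨((n+1 : ℤ) : ℝ), 0, 0, 0, 0⟩ : G235) = ⟨(n:ℝ),0,0,0,0⟩ * e1 := by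
        ext <;> simp [e1] <;> push_cast <;> ring
      rw [h]; exact mul_mem ih he1
  | pred n ih =>
      have h : (⟨((-n-1 : ℤ) : ℝ), 0, 0, 0, 0⟩ : G235) = ⟨((-n:ℤ):ℝ),0,0,0,0⟩ * e1⁻¹ := by
        ext <;> simp [e1] <;> push_cast <;> ring
      rw [h]; exact mul_mem ih (inv_mem he1)

lemma mem_e2pow (n : ℤ) : (⟨0, (n : ℝ), 0, 0, 0⟩ : G235) ∈ Γ := by
  induction n using Int.induction_on with
  | zero => exact (by ext <;> simp : (⟨0,((0:ℤ):ℝ),0,0,0⟩ : G235) = 1) ▸ one_mem Γ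
  | succ n ih =>
      have h : (⟨0, ((n+1 : ℤ) : ℝ), 0, 0, 0⟩ : G235) = ⟨0,(n:ℝ),0,0,0⟩ * e2 := by
        ext <;> simp [e2] <;> push_cast <;> ring
      rw [h]; exact mul_mem ih he2
  | pred n ih =>
      have h : (⟨0, ((-n-1 : ℤ) : ℝ), 0, 0, 0⟩ : G235) = ⟨0,((-n:ℤ):ℝ),0,0,0⟩ * e2⁻¹ := by
        ext <;> simp [e2] <;> push_cast <;> ring
      rw [h]; exact mul_mem ih (inv_mem he2)

lemma mem_z3pow (n : ℤ) : (⟨0, 0, (n : ℝ), (n:ℝ)/2, (n:ℝ)/2⟩ : G235) ∈ Γ := by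
  induction n using Int.induction_on with
  | zero => exact (by ext <;> simp : (⟨0,0,((0:ℤ):ℝ),((0:ℤ):ℝ)/2,((0:ℤ):ℝ)/2⟩ : G235) = 1) ▸
      one_mem Γ
  | succ n ih =>
      have h : (⟨0, 0, ((n+1 : ℤ) : ℝ), ((n+1:ℤ):ℝ)/2, ((n+1:ℤ):ℝ)/2⟩ : G235) =
          ⟨0,0,(n:ℝ),(n:ℝ)/2,(n:ℝ)/2⟩ * z3 := by
        ext <;> simp [z3] <;> push_cast <;> ring
      rw [h]; exact mul_mem ih hz3
  | pred n ih =>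
      have h : (⟨0, 0, ((-n-1 : ℤ) : ℝ), ((-n-1:ℤ):ℝ)/2, ((-n-1:ℤ):ℝ)/2⟩ : G235) =
          ⟨0,0,((-n:ℤ):ℝ),((-n:ℤ):ℝ)/2,((-n:ℤ):ℝ)/2⟩ * z3⁻¹ := by
        ext <;> simp [z3] <;> push_cast <;> ring
      rw [h]; exact mul_mem ih (inv_mem hz3)

lemma mem_z4pow (n : ℤ) : (⟨0, 0, 0, (n : ℝ), 0⟩ : G235) ∈ Γ := by
  induction n using Int.induction_on with
  | zero => exact (by ext <;> simp : (⟨0,0,0,((0:ℤ):ℝ),0⟩ : G235) = 1) ▸ one_mem Γ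
  | succ n ih =>
      have h : (⟨0, 0, 0, ((n+1 : ℤ) : ℝ), 0⟩ : G235) = ⟨0,0,0,(n:ℝ),0⟩ * z4 := by
        ext <;> simp [z4] <;> push_cast <;> ring
      rw [h]; exact mul_mem ih hz4
  | pred n ih =>
      have h : (⟨0, 0, 0, ((-n-1 : ℤ) : ℝ), 0⟩ : G235) = ⟨0,0,0,((-n:ℤ):ℝ),0⟩ * z4⁻¹ := by
        ext <;> simp [z4] <;> push_cast <;> ring
      rw [h]; exact mul_mem ih (inv_mem hz4)

lemma mem_z5pow (n : ℤ) : (⟨0, 0, 0, 0, (n : ℝ)⟩ : G235) ∈ Γ := by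
  induction n using Int.induction_on with
  | zero => exact (by ext <;> simp : (⟨0,0,0,0,((0:ℤ):ℝ)⟩ : G235) = 1) ▸ one_mem Γ
  | succ n ih =>
      have h : (⟨0, 0, 0, 0, ((n+1 : ℤ) : ℝ)⟩ : G235) = ⟨0,0,0,0,(n:ℝ)⟩ * z5 := by
        ext <;> simp [z5] <;> push_cast <;> ring
      rw [h]; exact mul_mem ih hz5
  | pred n ih =>
      have h : (⟨0, 0, 0, 0, ((-n-1 : ℤ) : ℝ)⟩ : G235) = ⟨0,0,0,0,((-n:ℤ):ℝ)⟩ * z5⁻¹ := by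
        ext <;> simp [z5] <;> push_cast <;> ring
      rw [h]; exact mul_mem ih (inv_mem hz5)

/-- The integrality subgroup containing `Γ₀`. -/
noncomputable def L : Subgroup G235 where
  carrier := {x | (∃ n : ℤ, x.a = n) ∧ (∃ n : ℤ, x.b = n) ∧ (∃ n : ℤ, 2 * x.c = n) ∧
    (∃ n : ℤ, 12 * x.d = n) ∧ (∃ n : ℤ, 12 * x.e = n)}
  one_mem' := ⟨⟨0, by simp⟩, ⟨0, by simp⟩, ⟨0, by simp⟩, ⟨0, by simp⟩, ⟨0, by simp⟩⟩
  mul_mem' := by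
    rintro x y ⟨⟨p1, hp1⟩, ⟨p2, hp2⟩, ⟨p3, hp3⟩, ⟨p4, hp4⟩, ⟨p5, hp5⟩⟩
      ⟨⟨q1, hq1⟩, ⟨q2, hq2⟩, ⟨q3, hq3⟩, ⟨q4, hq4⟩, ⟨q5, hq5⟩⟩
    have hxc : x.c = (p3 : ℝ) / 2 := by linarith
    have hyc : y.c = (q3 : ℝ) / 2 := by linarith
    have hxd : x.d = (p4 : ℝ) / 12 := by linarith
    have hyd : y.d = (q4 : ℝ) / 12 := by linarith
    have hxe : x.e = (p5 : ℝ) / 12 := by linarith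
    have hye : y.e = (q5 : ℝ) / 12 := by linarith
    refine ⟨⟨p1 + q1, ?_⟩, ⟨p2 + q2, ?_⟩, ⟨p3 + q3 + (p1 * q2 - p2 * q1), ?_⟩,
      ⟨p4 + q4 + 3 * p1 * q3 - 3 * p3 * q1 + (p1 - q1) * (p1 * q2 - p2 * q1), ?_⟩,
      ⟨p5 + q5 + 3 * p2 * q3 - 3 * p3 * q2 + (p2 - q2) * (p1 * q2 - p2 * q1), ?_⟩⟩ <;>
      simp only [mul_a, mul_b, mul_c, mul_d, mul_e, hp1, hp2, hq1, hq2, hxc, hyc,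
        hxd, hyd, hxe, hye] <;> push_cast <;> ring
  inv_mem' := by
    rintro x ⟨⟨p1, hp1⟩, ⟨p2, hp2⟩, ⟨p3, hp3⟩, ⟨p4, hp4⟩, ⟨p5, hp5⟩⟩
    refine ⟨⟨-p1, ?_⟩, ⟨-p2, ?_⟩, ⟨-p3, ?_⟩, ⟨-p4, ?_⟩, ⟨-p5, ?_⟩⟩ <;>
      simp only [inv_a, inv_b, inv_c, inv_d, inv_e] <;> push_cast <;> linarith

lemma gamma_le_L : Γ ≤ L := by
  rw [Subgroup.closure_le]
  rintro x (rfl | rfl)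
  · exact ⟨⟨1, by simp [e1]⟩, ⟨0, by simp [e1]⟩, ⟨0, by simp [e1]⟩, ⟨0, by simp [e1]⟩,
      ⟨0, by simp [e1]⟩⟩
  · exact ⟨⟨0, by simp [e2]⟩, ⟨1, by simp [e2]⟩, ⟨0, by simp [e2]⟩, ⟨0, by simp [e2]⟩,
      ⟨0, by simp [e2]⟩⟩

lemma int_eq_of_abs_lt {m n : ℤ} (h : |(m : ℝ) - n| < 1) : m = n := by
  rw [abs_lt] at h
  have h1 : (m : ℝ) < n + 1 := by linarith
  have h2 : (n : ℝ) < m + 1 := by linarith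
  have h1' : m < n + 1 := by exact_mod_cast h1
  have h2' : n < m + 1 := by exact_mod_cast h2
  omega

/-- The coordinate map to `ℝ⁵`. -/
noncomputable def ι : G235 → ℝ × ℝ × ℝ × ℝ × ℝ := fun x => (x.a, x.b, x.c, x.d, x.e)

lemma continuous_ι : Continuous ι := continuous_induced_dom

lemma continuous_coord_a : Continuous fun x : G235 => x.a := continuous_fst.comp continuous_ι
lemma continuous_coord_b : Continuous fun x : G235 => x.b :=
  (continuous_fst.comp continuous_snd).comp continuous_ι
lemma continuous_coord_c : Continuous fun x : G235 => x.c :=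
  (continuous_fst.comp (continuous_snd.comp continuous_snd)).comp continuous_ι
lemma continuous_coord_d : Continuous fun x : G235 => x.d :=
  (continuous_fst.comp (continuous_snd.comp (continuous_snd.comp continuous_snd))).comp
    continuous_ι
lemma continuous_coord_e : Continuous fun x : G235 => x.e :=
  (continuous_snd.comp (continuous_snd.comp (continuous_snd.comp continuous_snd))).comp
    continuous_ι

/-- `G235` is homeomorphic to `ℝ⁵`. -/
noncomputable def ιh : G235 ≃ₜ (ℝ × ℝ × ℝ × ℝ × ℝ) :=
  Equiv.toHomeomorphOfIsInducing
    ⟨ι, fun p => ⟨p.1, p.2.1, p.2.2.1, p.2.2.2.1, p.2.2.2.2⟩,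
      fun x => rfl, fun p => rfl⟩ ⟨rfl⟩

/-- Discreteness of `Γ₀`. -/
lemma discrete : DiscreteTopology Γ := by
  rw [discreteTopology_iff_isOpen_singleton]
  intro x
  rw [isOpen_induced_iff]
  refine ⟨{g : G235 | |g.a - (x : G235).a| < 1/24 ∧ |g.b - (x : G235).b| < 1/24 ∧
    |g.c - (x : G235).c| < 1/24 ∧ |g.d - (x : G235).d| < 1/24 ∧
    |g.e - (x : G235).e| < 1/24}, ?_, ?_⟩
  · apply IsOpen.inter
    · exact isOpen_Iio.preimage ((continuous_coord_a.sub continuous_const).abs)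
    apply IsOpen.inter
    · exact isOpen_Iio.preimage ((continuous_coord_b.sub continuous_const).abs)
    apply IsOpen.inter
    · exact isOpen_Iio.preimage ((continuous_coord_c.sub continuous_const).abs)
    apply IsOpen.inter
    · exact isOpen_Iio.preimage ((continuous_coord_d.sub continuous_const).abs)
    · exact isOpen_Iio.preimage ((continuous_coord_e.sub continuous_const).abs)
  · ext u
    simp only [Set.mem_preimage, Set.mem_setOf_eq, Set.mem_singleton_iff]
    constructor
    · rintro ⟨h1, h2, h3, h4, h5⟩
      obtain ⟨⟨m1, hm1⟩, ⟨m2, hm2⟩, ⟨m3, hm3⟩, ⟨m4, hm4⟩, ⟨m5, hm5⟩⟩ := gamma_le_L u.2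
      obtain ⟨⟨n1, hn1⟩, ⟨n2, hn2⟩, ⟨n3, hn3⟩, ⟨n4, hn4⟩, ⟨n5, hn5⟩⟩ := gamma_le_L x.2
      have e1' : m1 = n1 := int_eq_of_abs_lt (by rw [← hm1, ← hn1]; linarith [abs_nonneg ((u:G235).a - (x:G235).a), h1])
      have e2' : m2 = n2 := int_eq_of_abs_lt (by rw [← hm2, ← hn2]; linarith)
      have e3' : m3 = n3 := int_eq_of_abs_lt (by
        have h3' := abs_lt.mp h3
        rw [← hm3, ← hn3, abs_lt]; constructor <;> linarith [h3'.1, h3'.2])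
      have e4' : m4 = n4 := int_eq_of_abs_lt (by
        have h4' := abs_lt.mp h4
        rw [← hm4, ← hn4, abs_lt]; constructor <;> linarith [h4'.1, h4'.2])
      have e5' : m5 = n5 := int_eq_of_abs_lt (by
        have h5' := abs_lt.mp h5
        rw [← hm5, ← hn5, abs_lt]; constructor <;> linarith [h5'.1, h5'.2])
      have : (u : G235) = (x : G235) := by
        ext
        · rw [hm1, hn1, e1']
        · rw [hm2, hn2, e2']
        · have : (2:ℝ) * (u:G235).c = 2 * (x:G235).c := by rw [hm3, hn3, e3']
          linarith
        · have : (12:ℝ) * (u:G235).d = 12 * (x:G235).d := by rw [hm4, hn4, e4']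
          linarith
        · have : (12:ℝ) * (u:G235).e = 12 * (x:G235).e := by rw [hm5, hn5, e5']
          linarith
      exact Subtype.ext this
    · rintro rfl
      norm_num

/-- Every coset of `Γ₀` has a representative in the unit box. -/
lemma exists_red (g : G235) : ∃ γ ∈ Γ, (g * γ).a ∈ Set.Icc (0:ℝ) 1 ∧
    (g * γ).b ∈ Set.Icc (0:ℝ) 1 ∧ (g * γ).c ∈ Set.Icc (0:ℝ) 1 ∧
    (g * γ).d ∈ Set.Icc (0:ℝ) 1 ∧ (g * γ).e ∈ Set.Icc (0:ℝ) 1 := by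
  set γ1 : G235 := ⟨((-⌊g.a⌋ : ℤ) : ℝ), 0, 0, 0, 0⟩ with hγ1
  set g1 : G235 := g * γ1 with hg1
  set γ2 : G235 := ⟨0, ((-⌊g1.b⌋ : ℤ) : ℝ), 0, 0, 0⟩ with hγ2
  set g2 : G235 := g1 * γ2 with hg2
  set γ3 : G235 := ⟨0, 0, ((-⌊g2.c⌋ : ℤ) : ℝ), ((-⌊g2.c⌋ : ℤ) : ℝ)/2,
    ((-⌊g2.c⌋ : ℤ) : ℝ)/2⟩ with hγ3
  set g3 : G235 := g2 * γ3 with hg3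
  set γ4 : G235 := ⟨0, 0, 0, ((-⌊g3.d⌋ : ℤ) : ℝ), 0⟩ with hγ4
  set g4 : G235 := g3 * γ4 with hg4
  set γ5 : G235 := ⟨0, 0, 0, 0, ((-⌊g4.e⌋ : ℤ) : ℝ)⟩ with hγ5
  refine ⟨γ1 * (γ2 * (γ3 * (γ4 * γ5))),
    mul_mem (mem_e1pow _) (mul_mem (mem_e2pow _) (mul_mem (mem_z3pow _)
      (mul_mem (mem_z4pow _) (mem_z5pow _)))), ?_⟩
  have key : g * (γ1 * (γ2 * (γ3 * (γ4 * γ5)))) = g4 * γ5 := by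
    rw [hg4, hg3, hg2, hg1]; simp only [mul_assoc]
  rw [key]
  -- coordinate computations
  have ha1 : g1.a = g.a - ⌊g.a⌋ := by
    simp only [hg1, hγ1, mul_a]; push_cast; ring
  have ha2 : g2.a = g1.a := by simp [hg2, hγ2]
  have ha3 : g3.a = g2.a := by simp [hg3, hγ3]
  have ha4 : g4.a = g3.a := by simp [hg4, hγ4]
  have ha5 : (g4 * γ5).a = g4.a := by simp [hγ5]
  have hb2 : g2.b = g1.b - ⌊g1.b⌋ := by
    simp only [hg2, hγ2, mul_b]; push_cast; ring
  have hb3 : g3.b = g2.b := by simp [hg3, hγ3]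
  have hb4 : g4.b = g3.b := by simp [hg4, hγ4]
  have hb5 : (g4 * γ5).b = g4.b := by simp [hγ5]
  have hc3 : g3.c = g2.c - ⌊g2.c⌋ := by
    simp only [hg3, hγ3, mul_c]; push_cast; ring
  have hc4 : g4.c = g3.c := by simp [hg4, hγ4]
  have hc5 : (g4 * γ5).c = g4.c := by simp [hγ5]
  have hd4 : g4.d = g3.d - ⌊g3.d⌋ := by
    simp only [hg4, hγ4, mul_d]; push_cast; ring
  have hd5 : (g4 * γ5).d = g4.d := by simp [hγ5]
  have he5 : (g4 * γ5).e = g4.e - ⌊g4.e⌋ := by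
    simp only [hγ5, mul_e]; push_cast; ring
  refine ⟨?_, ?_, ?_, ?_, ?_⟩
  · rw [ha5, ha4, ha3, ha2, ha1]
    exact ⟨by linarith [Int.floor_le g.a], by linarith [Int.lt_floor_add_one g.a]⟩
  · rw [hb5, hb4, hb3, hb2]
    exact ⟨by linarith [Int.floor_le g1.b], by linarith [Int.lt_floor_add_one g1.b]⟩
  · rw [hc5, hc4, hc3]
    exact ⟨by linarith [Int.floor_le g2.c], by linarith [Int.lt_floor_add_one g2.c]⟩
  · rw [hd5, hd4]
    exact ⟨by linarith [Int.floor_le g3.d], by linarith [Int.lt_floor_add_one g3.d]⟩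
  · rw [he5]
    exact ⟨by linarith [Int.floor_le g4.e], by linarith [Int.lt_floor_add_one g4.e]⟩

end G235Aux

/-- `Γ₀` is a lattice in `G`: it is discrete as a subset of `ℝ⁵`, and the quotient space
`G/Γ₀` of left cosets, with the quotient topology, is compact. -/
theorem stmt13 :
    DiscreteTopology (Subgroup.closure ({e1, e2} : Set G235)) ∧
      CompactSpace (G235 ⧸ Subgroup.closure ({e1, e2} : Set G235)) := by
  open G235Aux in
  refine ⟨G235Aux.discrete, ?_⟩
  set K : Set G235 :=
    G235Aux.ιh ⁻¹' (Set.Icc ((0:ℝ), (0:ℝ), (0:ℝ), (0:ℝ), (0:ℝ)) (1, 1, 1, 1, 1)) with hK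
  have hKc : IsCompact K := G235Aux.ιh.isCompact_preimage.mpr isCompact_Icc
  have hsurj : Set.univ = (QuotientGroup.mk : G235 → G235 ⧸ G235Aux.Γ) '' K := by
    ext q
    simp only [Set.mem_univ, true_iff, Set.mem_image]
    obtain ⟨g, rfl⟩ := QuotientGroup.mk_surjective q
    obtain ⟨γ, hγ, ha, hb, hc, hd, he⟩ := G235Aux.exists_red g
    refine ⟨g * γ, ?_, QuotientGroup.mk_mul_of_mem g hγ⟩
    simp only [hK, Set.mem_preimage, Set.mem_Icc, Prod.le_def]
    exact ⟨⟨ha.1, hb.1, hc.1, hd.1, he.1⟩, ⟨ha.2, hb.2, hc.2, hd.2, he.2⟩⟩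
  refine ⟨?_⟩
  rw [hsurj]
  exact hKc.image continuous_quotient_mk'
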